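/- Let $N \geq 2$ and $\epsilon > 0$. Then there exists an integer $r$ (any $r$ with $2^{r-1}/(r+3) > 1/\epsilon$ works) and, for all sufficiently large $n$, a set $S_n \subseteq \{0,\dots,N-1\}^n$ with $|S_n| \geq N^{(1-\epsilon)n}$ such that $M(S_n) \leq r$. In particular, there is a family of sets $S_n$ with $M(S_n)$ uniformly bounded and $\frac{\log_N |S_n|}{n} > 1 - \epsilon$ for every $n$. -/

import Mathlib

open scoped BigOperators

/-- The 0/1 cube in `ℤ^m`. -/
def cube (m : ℕ) : Set (Fin m → ℤ) := {v | ∀ i, v i = 0 ∨ v i = 1}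

/-- `S` contains an affine copy of the `m`-dimensional 0/1 cube: there is a map
`ι` which is affine (of the form `y ↦ A y + z` on the cube), injective on the
cube, and whose image of the cube is contained in `S`. -/
def HasCube {n : ℕ} (S : Set (Fin n → ℤ)) (m : ℕ) : Prop :=
  ∃ ι : (Fin m → ℤ) → (Fin n → ℤ),
    (∃ A : Matrix (Fin n) (Fin m) ℤ, ∃ z : Fin n → ℤ, ∀ y ∈ cube m, ι y = A.mulVec y + z) ∧
    Set.InjOn ι (cube m) ∧ ι '' (cube m) ⊆ S

/-- `M(S)`: the largest `m` such that `S` contains an affine copy of the `m`-cube. -/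
noncomputable def Mval {n : ℕ} (S : Set (Fin n → ℤ)) : ℕ := sSup {m | HasCube S m}

/-- The box `{0,1,…,N-1}^n` inside `ℤ^n`. -/
noncomputable def box (N n : ℕ) : Finset (Fin n → ℤ) := Fintype.piFinset fun _ => Finset.Icc 0 ((N : ℤ) - 1)

/-- `f_N(n,c)`: the minimal value of `M(S)` over subsets `S` of the box of density at least `c`. -/
noncomputable def fN (N n : ℕ) (c : ℝ) : ℕ :=
  sInf {k | ∃ S : Finset (Fin n → ℤ), S ⊆ box N n ∧ c * (N : ℝ) ^ n ≤ S.card ∧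
    Mval (S : Set (Fin n → ℤ)) = k}

/-! Auxiliary -/

def vert (m : ℕ) : Finset (Fin m → ℤ) := Fintype.piFinset fun _ => ({0, 1} : Finset ℤ)

lemma mem_vert {m : ℕ} {y : Fin m → ℤ} : y ∈ vert m ↔ y ∈ cube m := by
  simp [vert, cube, Fintype.mem_piFinset]

lemma vert_card (m : ℕ) : (vert m).card = 2 ^ m := by
  simp [vert, Fintype.card_piFinset]

def affMap {n m : ℕ} (q : Fin (m + 1) → (Fin n → ℤ)) (y : Fin m → ℤ) : Fin n → ℤ :=
  fun j => q 0 j + ∑ i, y i * (q i.succ j - q 0 j)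

lemma hasCube_zero {n : ℕ} {S : Set (Fin n → ℤ)} {x : Fin n → ℤ} (hx : x ∈ S) :
    HasCube S 0 := by
  refine ⟨fun _ => x, ⟨0, x, fun y _ => ?_⟩, fun a _ b _ _ => Subsingleton.elim a b, ?_⟩
  · funext j; simp [Matrix.mulVec]
  · rintro t ⟨y, _, rfl⟩; exact hx

lemma hasCube_anti {n : ℕ} {S : Set (Fin n → ℤ)} {m m' : ℕ} (hmm : m ≤ m')
    (h : HasCube S m') : HasCube S m := by
  classical
  obtain ⟨ι, ⟨A, z, haff⟩, hinj, himg⟩ := h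
  let E : (Fin m → ℤ) → (Fin m' → ℤ) := fun y i => if h : (i : ℕ) < m then y ⟨i, h⟩ else 0
  have hEcube : ∀ y ∈ cube m, E y ∈ cube m' := by
    intro y hy i
    by_cases h : (i : ℕ) < m
    · simpa [E, h] using hy ⟨i, h⟩
    · simp [E, h]
  have hEinj : Function.Injective E := by
    intro y1 y2 hE
    funext i
    have := congrFun hE ⟨(i : ℕ), lt_of_lt_of_le i.2 hmm⟩
    simpa [E, i.2] using this
  set P : Matrix (Fin m') (Fin m) ℤ := Matrix.of fun i j => if (i : ℕ) = (j : ℕ) then 1 else 0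
    with hP
  have hPE : ∀ y : Fin m → ℤ, P.mulVec y = E y := by
    intro y
    funext i
    by_cases h : (i : ℕ) < m
    · have : P.mulVec y i = ∑ j : Fin m, (if (i : ℕ) = (j : ℕ) then 1 else 0) * y j := rfl
      rw [this, Finset.sum_eq_single (⟨(i : ℕ), h⟩ : Fin m)]
      · simp [E, h]
      · intro j _ hj
        have : ¬ ((i : ℕ) = (j : ℕ)) := by
          intro hc; apply hj; exact (Fin.ext (by simpa using hc.symm))
        simp [this]
      · intro hc; exact absurd (Finset.mem_univ _) hc
    · have : P.mulVec y i = ∑ j : Fin m, (if (i : ℕ) = (j : ℕ) then 1 else 0) * y j := rfl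
      rw [this, Finset.sum_eq_zero]
      · simp [E, h]
      · intro j _
        have : ¬ ((i : ℕ) = (j : ℕ)) := by
          intro hc; exact h (hc ▸ j.2)
        simp [this]
  refine ⟨ι ∘ E, ⟨A * P, z, fun y hy => ?_⟩, ?_, ?_⟩
  · have := haff (E y) (hEcube y hy)
    simp only [Function.comp_apply, this]
    rw [← Matrix.mulVec_mulVec, hPE]
  · exact Set.InjOn.comp hinj (hEinj.injOn) (fun y hy => hEcube y hy)
  · rintro t ⟨y, hy, rfl⟩
    exact himg ⟨E y, hEcube y hy, rfl⟩

lemma exists_tuple_of_hasCube {n m : ℕ} {S : Set (Fin n → ℤ)} (h : HasCube S m) :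
    ∃ q : Fin (m + 1) → (Fin n → ℤ), (∀ i, q i ∈ S) ∧
      (∀ y ∈ vert m, affMap q y ∈ S) ∧
      ((vert m).image (affMap q)).card = 2 ^ m := by
  classical
  obtain ⟨ι, ⟨A, z, haff⟩, hinj, himg⟩ := h
  have h0cube : (fun _ => 0 : Fin m → ℤ) ∈ cube m := fun i => Or.inl rfl
  have hecube : ∀ i : Fin m, (fun k => if k = i then 1 else 0 : Fin m → ℤ) ∈ cube m := by
    intro i k
    by_cases h : k = i <;> simp [h]
  set q : Fin (m + 1) → (Fin n → ℤ) :=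
    fun i => Fin.cases (ι (fun _ => 0)) (fun i => ι (fun k => if k = i then 1 else 0)) i with hq
  have hq0 : q 0 = ι (fun _ => 0) := rfl
  have hqs : ∀ i : Fin m, q i.succ = ι (fun k => if k = i then 1 else 0) := fun i => rfl
  have hA0 : ι (fun _ => 0) = z := by
    rw [haff _ h0cube]
    have h0 : (fun _ => (0 : ℤ) : Fin m → ℤ) = 0 := rfl
    rw [h0, Matrix.mulVec_zero, zero_add]
  have hAe : ∀ (i : Fin m) (j : Fin n), ι (fun k => if k = i then 1 else 0) j = A j i + z j := by
    intro i j
    rw [haff _ (hecube i)]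
    have : A.mulVec (fun k => if k = i then 1 else 0) j
        = ∑ k : Fin m, A j k * (if k = i then 1 else 0) := rfl
    simp only [Pi.add_apply, this, mul_ite, mul_one, mul_zero]
    rw [Finset.sum_ite_eq' Finset.univ i (fun k => A j k)]
    simp
  have key : ∀ y ∈ cube m, affMap q y = ι y := by
    intro y hy
    funext j
    rw [haff y hy]
    simp only [affMap, hq0, hqs, hA0, Pi.add_apply]
    have : ∀ i : Fin m, y i * (ι (fun k => if k = i then 1 else 0) j - z j) = y i * A j i := by
      intro i; rw [hAe i j]; ring_nf
    rw [Finset.sum_congr rfl (fun i _ => this i)]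
    have : A.mulVec y j = ∑ i : Fin m, A j i * y i := rfl
    rw [this, add_comm]
    congr 1
    exact Finset.sum_congr rfl (fun i _ => mul_comm _ _)
  have hqS : ∀ i, q i ∈ S := by
    intro i
    refine Fin.cases ?_ ?_ i
    · exact himg ⟨_, h0cube, rfl⟩
    · intro i; exact himg ⟨_, hecube i, rfl⟩
  refine ⟨q, hqS, ?_, ?_⟩
  · intro y hy
    rw [key y (mem_vert.1 hy)]
    exact himg ⟨y, mem_vert.1 hy, rfl⟩
  · rw [← vert_card m]
    apply Finset.card_image_of_injOn
    intro y1 hy1 y2 hy2 he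
    rw [key y1 (mem_vert.1 hy1), key y2 (mem_vert.1 hy2)] at he
    exact hinj (mem_vert.1 hy1) (mem_vert.1 hy2) he

lemma count_supersets {α : Type*} [DecidableEq α] (B T : Finset α) (s : ℕ) :
    ((B.powersetCard s).filter (fun S => T ⊆ S)).card
      ≤ (B.card - T.card).choose (s - T.card) := by
  classical
  by_cases hTB : T ⊆ B
  · rw [← Finset.card_sdiff_of_subset hTB, ← Finset.card_powersetCard ((s - T.card)) (B \ T)]
    apply Finset.card_le_card_of_injOn (fun S => S \ T)
    · intro S hS
      simp only [Finset.mem_coe, Finset.mem_filter, Finset.mem_powersetCard] at hS ⊢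
      obtain ⟨⟨hSB, hScard⟩, hTS⟩ := hS
      refine ⟨fun x hx => ?_, ?_⟩
      · rw [Finset.mem_sdiff] at hx ⊢
        exact ⟨hSB hx.1, hx.2⟩
      · rw [Finset.card_sdiff_of_subset hTS, hScard]
    · intro S1 h1 S2 h2 he
      simp only [Finset.coe_filter, Set.mem_setOf_eq, Finset.mem_powersetCard] at h1 h2
      have e1 : S1 = S1 \ T ∪ T := (Finset.sdiff_union_of_subset h1.2).symm
      have e2 : S2 = S2 \ T ∪ T := (Finset.sdiff_union_of_subset h2.2).symm
      have he' : S1 \ T = S2 \ T := he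
      rw [e1, e2, he']
  · convert Nat.zero_le _
    rw [Finset.card_eq_zero, Finset.filter_eq_empty_iff]
    intro S hS hTS
    rw [Finset.mem_powersetCard] at hS
    exact hTB (hTS.trans hS.1)

lemma box_card (N n : ℕ) (hN : 1 ≤ N) : (box N n).card = N ^ n := by
  rw [box, Fintype.card_piFinset]
  have : (Finset.Icc (0 : ℤ) ((N : ℤ) - 1)).card = N := by
    rw [Int.card_Icc]
    omega
  simp [this]

lemma exists_good (N n m s : ℕ) (hs : s ≤ (box N n).card)
    (hlt : (box N n).card ^ (m + 1) * s.choose (2 ^ m) < (box N n).card.choose (2 ^ m)) :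
    ∃ S : Finset (Fin n → ℤ), S ⊆ box N n ∧ S.card = s ∧ ¬ HasCube (S : Set (Fin n → ℤ)) m := by
  classical
  set B := box N n with hB
  set M := B.card with hM
  set K := 2 ^ m with hK
  by_contra hcon
  simp only [not_exists, not_and, not_not] at hcon
  have hall : ∀ S ∈ B.powersetCard s, HasCube (↑S : Set (Fin n → ℤ)) m := by
    intro S hS
    rw [Finset.mem_powersetCard] at hS
    exact hcon S hS.1 hS.2
  set Q : Finset (Fin (m + 1) → (Fin n → ℤ)) := Fintype.piFinset (fun _ => B) with hQ
  set Q' := Q.filter (fun q => ((vert m).image (affMap q)).card = K) with hQ'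
  have cover : B.powersetCard s ⊆
      Q'.biUnion (fun q => (B.powersetCard s).filter
        (fun S => (vert m).image (affMap q) ⊆ S)) := by
    intro S hS
    obtain ⟨q, hqS, hmem, hcard⟩ := exists_tuple_of_hasCube (hall S hS)
    have hSB : S ⊆ B := (Finset.mem_powersetCard.1 hS).1
    rw [Finset.mem_biUnion]
    refine ⟨q, ?_, ?_⟩
    · rw [hQ', Finset.mem_filter]
      exact ⟨Fintype.mem_piFinset.2 (fun i => hSB (hqS i)), hcard⟩
    · rw [Finset.mem_filter]
      refine ⟨hS, fun x hx => ?_⟩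
      rw [Finset.mem_image] at hx
      obtain ⟨y, hy, rfl⟩ := hx
      exact hmem y hy
  have hKs : K ≤ s := by
    have hne : (B.powersetCard s).Nonempty := Finset.powersetCard_nonempty.2 hs
    obtain ⟨S₀, hS₀⟩ := hne
    obtain ⟨q, hqS, hmem, hcard⟩ := exists_tuple_of_hasCube (hall S₀ hS₀)
    have hsub : (vert m).image (affMap q) ⊆ S₀ := by
      intro x hx
      rw [Finset.mem_image] at hx
      obtain ⟨y, hy, rfl⟩ := hx
      exact hmem y hy
    have := Finset.card_le_card hsub
    rw [hcard, (Finset.mem_powersetCard.1 hS₀).2] at this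
    exact this
  have hQcard : Q.card = M ^ (m + 1) := by
    rw [hQ, Fintype.card_piFinset]
    simp [Finset.prod_const, hM]
  have hmain : M.choose s ≤ M ^ (m + 1) * (M - K).choose (s - K) := by
    calc M.choose s = (B.powersetCard s).card := (Finset.card_powersetCard s B).symm
      _ ≤ (Q'.biUnion _).card := Finset.card_le_card cover
      _ ≤ ∑ q ∈ Q', ((B.powersetCard s).filter
            (fun S => (vert m).image (affMap q) ⊆ S)).card := Finset.card_biUnion_le
      _ ≤ ∑ q ∈ Q', (M - K).choose (s - K) := by
          apply Finset.sum_le_sum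
          intro q hq
          have hqK : ((vert m).image (affMap q)).card = K := (Finset.mem_filter.1 hq).2
          have := count_supersets B ((vert m).image (affMap q)) s
          rwa [hqK, ← hM] at this
      _ = Q'.card * (M - K).choose (s - K) := by rw [Finset.sum_const, smul_eq_mul]
      _ ≤ M ^ (m + 1) * (M - K).choose (s - K) := by
          apply Nat.mul_le_mul_right
          rw [← hQcard]
          exact Finset.card_le_card (Finset.filter_subset _ _)
  have hid : M.choose s * s.choose K = M.choose K * (M - K).choose (s - K) :=
    Nat.choose_mul hKs
  have hpos : 0 < (M - K).choose (s - K) :=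
    Nat.choose_pos (by omega)
  have : M.choose K * (M - K).choose (s - K)
      ≤ (M ^ (m + 1) * s.choose K) * (M - K).choose (s - K) := by
    calc M.choose K * (M - K).choose (s - K) = M.choose s * s.choose K := hid.symm
      _ ≤ (M ^ (m + 1) * (M - K).choose (s - K)) * s.choose K :=
          Nat.mul_le_mul_right _ hmain
      _ = (M ^ (m + 1) * s.choose K) * (M - K).choose (s - K) := by ring
  have hfin : M.choose K ≤ M ^ (m + 1) * s.choose K := Nat.le_of_mul_le_mul_right this hpos
  omega

lemma Mval_le {n r : ℕ} {S : Set (Fin n → ℤ)} (hne : S.Nonempty)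
    (h : ¬ HasCube S (r + 1)) : Mval S ≤ r := by
  obtain ⟨x, hx⟩ := hne
  refine csSup_le ⟨0, ?_⟩ ?_
  · exact hasCube_zero hx
  intro m hm
  by_contra hc
  push_neg at hc
  exact h (hasCube_anti (by omega) hm)

lemma nat_aux (k : ℕ) : 2 * k + 7 ≤ 2 ^ (2 * k + 3) := by
  have h1 : k + 1 ≤ 2 ^ k := by have := (Nat.lt_two_pow_self (n := k)); omega
  have h2 : 2 ^ (2 * k + 3) = 8 * 2 ^ k * 2 ^ k := by
    rw [show 2 * k + 3 = k + (k + 3) by omega, pow_add, pow_add]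
    ring
  have h3 : 1 ≤ 2 ^ k := Nat.one_le_two_pow
  calc 2 * k + 7 ≤ 8 * (k + 1) := by omega
    _ ≤ 8 * 2 ^ k := by omega
    _ ≤ 8 * 2 ^ k * 2 ^ k := Nat.le_mul_of_pos_right _ (by omega)
    _ = 2 ^ (2 * k + 3) := h2.symm

set_option maxHeartbeats 1000000 in
theorem stmt15 (N : ℕ) (hN : 2 ≤ N) (ε : ℝ) (hε : 0 < ε) :
    ∃ r : ℕ, 1 / ε < 2 ^ (r - 1) / ((r : ℝ) + 3) ∧
      ∀ᶠ n : ℕ in Filter.atTop, ∃ S : Finset (Fin n → ℤ),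
        S ⊆ box N n ∧ (N : ℝ) ^ ((1 - ε) * n) ≤ (S.card : ℝ) ∧
        Mval (S : Set (Fin n → ℤ)) ≤ r := by
  classical
  set k : ℕ := ⌈1 / ε⌉₊ with hkdef
  set r : ℕ := 2 * k + 4 with hrdef
  have hεinv : (0 : ℝ) < 1 / ε := by positivity
  have hklb : 1 / ε ≤ (k : ℝ) := Nat.le_ceil _
  have hk2 : (k : ℝ) + 1 ≤ 2 ^ k := by
    have h := (Nat.lt_two_pow_self (n := k))
    have h' : k + 1 ≤ 2 ^ k := h
    exact_mod_cast h'
  have hr1 : r - 1 = 2 * k + 3 := by omega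
  have hpow : (2 : ℝ) ^ (2 * k + 3) = 8 * 2 ^ k * 2 ^ k := by
    rw [show 2 * k + 3 = k + (k + 3) by omega, pow_add, pow_add]
    ring
  have part1 : 1 / ε < 2 ^ (r - 1) / ((r : ℝ) + 3) := by
    rw [hr1, lt_div_iff₀ (by positivity)]
    have hrk : (r : ℝ) + 3 = 2 * k + 7 := by rw [hrdef]; push_cast; ring
    rw [hrk, hpow]
    have h2k : (0:ℝ) < 2 ^ k := by positivity
    nlinarith [hklb, hk2, hεinv, h2k, sq_nonneg ((2:ℝ)^k - (k:ℝ))]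
  refine ⟨r, part1, ?_⟩
  -- constants
  set K : ℕ := 2 ^ (r + 1) with hKdef
  set ε₀ : ℝ := min ε (1 / 2) with hε₀def
  have hε₀pos : 0 < ε₀ := lt_min hε (by norm_num)
  have hε₀ε : ε₀ ≤ ε := min_le_left _ _
  have hε₀half : ε₀ ≤ 1 / 2 := min_le_right _ _
  set c : ℝ := ε₀ * K - (r + 2) with hcdef
  have hrpow : ((r : ℝ) + 3) < ε * 2 ^ (r - 1) := by
    have h := part1
    rw [div_lt_div_iff₀ hε (by positivity)] at h
    nlinarith [h]
  have hKr : (K : ℝ) = 4 * 2 ^ (r - 1) := by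
    have : K = 4 * 2 ^ (r - 1) := by
      rw [hKdef, show r + 1 = (r - 1) + 2 by omega, pow_add]
      ring
    exact_mod_cast this
  have hc : 0 < c := by
    rw [hcdef]
    rcases le_or_gt ε (1/2) with hcase | hcase
    · have hε₀eq : ε₀ = ε := min_eq_left hcase
      rw [hε₀eq, hKr]
      have hr0 : (0:ℝ) ≤ (r:ℝ) := Nat.cast_nonneg r
      nlinarith [hrpow]
    · have hε₀eq : ε₀ = 1/2 := min_eq_right (le_of_lt hcase)
      have hn : r + 2 < 2 ^ r := by
        have h1 := nat_aux k
        have h2 : 2 ^ (2*k+3) ≤ 2 ^ r := Nat.pow_le_pow_right (by norm_num) (by omega)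
        omega
      have hn' : (r:ℝ) + 2 < 2 ^ r := by exact_mod_cast hn
      have hK2 : (K : ℝ) = 2 * 2 ^ r := by
        have : K = 2 * 2 ^ r := by rw [hKdef, pow_succ]; ring
        exact_mod_cast this
      rw [hε₀eq, hK2]
      nlinarith [hn']
  -- eventual part
  have hN0 : (0:ℝ) < N := by exact_mod_cast (by omega : 0 < N)
  have htc : (1:ℝ) < (2:ℝ) ^ c := by
    rw [Real.one_lt_rpow_iff_of_pos (by norm_num)]
    exact Or.inl ⟨one_lt_two, hc⟩
  have htε : (1:ℝ) < (2:ℝ) ^ ε₀ := by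
    rw [Real.one_lt_rpow_iff_of_pos (by norm_num)]
    exact Or.inl ⟨one_lt_two, hε₀pos⟩
  have Ev2 : ∀ᶠ n : ℕ in Filter.atTop, (4:ℝ)^K * (K.factorial : ℝ) < ((2:ℝ)^c)^n :=
    (tendsto_pow_atTop_atTop_of_one_lt htc).eventually_gt_atTop _
  have Ev3 : ∀ᶠ n : ℕ in Filter.atTop, (2:ℝ) ≤ ((2:ℝ)^ε₀)^n :=
    (tendsto_pow_atTop_atTop_of_one_lt htε).eventually_ge_atTop _
  have Ev1 : ∀ᶠ n : ℕ in Filter.atTop, 2 * K ≤ n := Filter.eventually_ge_atTop _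
  filter_upwards [Ev1, Ev2, Ev3] with n h2K h4K h2ε
  set Mn : ℕ := N ^ n with hMn
  have hboxcard : (box N n).card = Mn := box_card N n (by omega)
  set a : ℝ := (Mn : ℝ) with hadef
  have haN : a = (N:ℝ) ^ n := by rw [hadef, hMn]; push_cast; ring
  have h2n : (2:ℝ) ^ n ≤ a := by
    rw [haN]
    exact pow_le_pow_left₀ (by norm_num) (by exact_mod_cast hN) n
  have ha1 : (1:ℝ) ≤ a := le_trans (one_le_pow₀ one_le_two) h2n
  have ha0 : (0:ℝ) < a := lt_of_lt_of_le one_pos ha1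
  have hT0 : (0:ℝ) < (N:ℝ) ^ ((1 - ε) * (n:ℝ)) := Real.rpow_pos_of_pos hN0 _
  set s : ℕ := ⌈(N:ℝ) ^ ((1 - ε) * (n:ℝ))⌉₊ with hsdef
  have hTa : (N:ℝ) ^ ((1 - ε) * (n:ℝ)) = a ^ (1 - ε) := by
    rw [haN, ← Real.rpow_natCast (N:ℝ) n, ← Real.rpow_mul hN0.le]
    congr 1
    ring
  have h3 : (1:ℝ) ≤ a ^ ((1:ℝ) - ε₀) := by
    have := Real.rpow_le_rpow_of_exponent_le ha1 (by linarith : (0:ℝ) ≤ 1 - ε₀)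
    simpa using this
  have hs_ub : (s:ℝ) ≤ 2 * a ^ ((1:ℝ) - ε₀) := by
    have h1 : (s:ℝ) < (N:ℝ) ^ ((1 - ε) * (n:ℝ)) + 1 := Nat.ceil_lt_add_one hT0.le
    have h2 : a ^ ((1:ℝ) - ε) ≤ a ^ ((1:ℝ) - ε₀) :=
      Real.rpow_le_rpow_of_exponent_le ha1 (by linarith)
    rw [hTa] at h1
    linarith
  have hswap : ((2:ℝ) ^ ε₀) ^ n = ((2:ℝ) ^ (n:ℕ)) ^ ε₀ := by
    rw [← Real.rpow_natCast ((2:ℝ) ^ ε₀) n, ← Real.rpow_mul (by norm_num),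
      ← Real.rpow_natCast (2:ℝ) n, ← Real.rpow_mul (by norm_num), mul_comm]
  have haε₀ : (2:ℝ) ≤ a ^ ε₀ := by
    calc (2:ℝ) ≤ ((2:ℝ) ^ ε₀) ^ n := h2ε
      _ = ((2:ℝ) ^ (n:ℕ)) ^ ε₀ := hswap
      _ ≤ a ^ ε₀ := Real.rpow_le_rpow (by positivity) h2n hε₀pos.le
  have hsa : (s:ℝ) ≤ a := by
    calc (s:ℝ) ≤ 2 * a ^ ((1:ℝ) - ε₀) := hs_ub
      _ ≤ a ^ ε₀ * a ^ ((1:ℝ) - ε₀) := by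
          apply mul_le_mul_of_nonneg_right haε₀ (by positivity)
      _ = a := by
          rw [← Real.rpow_add ha0]
          norm_num
  have hsM : s ≤ Mn := by
    rw [hadef] at hsa
    exact_mod_cast hsa
  have hKM : 2 * K ≤ Mn := by
    have hn2 : n ≤ 2 ^ n := Nat.le_of_lt ((Nat.lt_two_pow_self (n := n)))
    have h2N : 2 ^ n ≤ N ^ n := Nat.pow_le_pow_left hN n
    omega
  have hac : (4:ℝ)^K * (K.factorial : ℝ) < a ^ c := by
    calc (4:ℝ)^K * (K.factorial : ℝ) < ((2:ℝ)^c)^n := h4K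
      _ = ((2:ℝ) ^ (n:ℕ)) ^ c := by
          rw [← Real.rpow_natCast ((2:ℝ) ^ c) n, ← Real.rpow_mul (by norm_num),
            ← Real.rpow_natCast (2:ℝ) n, ← Real.rpow_mul (by norm_num), mul_comm]
      _ ≤ a ^ c := Real.rpow_le_rpow (by positivity) h2n hc.le
  -- core real inequality
  have hKa : (K:ℝ) ≤ a / 2 := by
    have : ((2 * K : ℕ) : ℝ) ≤ a := by rw [hadef]; exact_mod_cast hKM
    push_cast at this
    linarith
  have hKM1 : K ≤ Mn + 1 := by omega
  have hcastR : ((Mn + 1 - K : ℕ) : ℝ) = a + 1 - K := by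
    rw [Nat.cast_sub hKM1]
    push_cast
    rw [hadef]
  have hhalf : a / 2 ≤ ((Mn + 1 - K : ℕ) : ℝ) := by rw [hcastR]; linarith
  have hmain : a ^ (r+2) * (2 * a ^ ((1:ℝ) - ε₀))^K * (K.factorial : ℝ) < (a/2)^K := by
    have e1 : a ^ (r+2 : ℕ) = a ^ ((r+2 : ℕ) : ℝ) := (Real.rpow_natCast a _).symm
    have e2 : (2 * a ^ ((1:ℝ) - ε₀))^K = 2^K * a ^ (((1:ℝ) - ε₀) * (K:ℝ)) := by
      rw [mul_pow, ← Real.rpow_natCast (a ^ ((1:ℝ) - ε₀)) K, ← Real.rpow_mul ha0.le]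
    have e3 : (a/2)^K = a ^ ((K:ℕ) : ℝ) / 2^K := by rw [div_pow, Real.rpow_natCast]
    have e5 : a ^ ((r+2 : ℕ) : ℝ) * a ^ (((1:ℝ) - ε₀) * (K:ℝ)) * a ^ c
        = a ^ ((K:ℕ) : ℝ) := by
      rw [← Real.rpow_add ha0, ← Real.rpow_add ha0]
      congr 1
      rw [hcdef]
      push_cast
      ring
    rw [e1, e2, e3, ← e5]
    have hpos1 : 0 < a ^ ((r+2 : ℕ) : ℝ) := Real.rpow_pos_of_pos ha0 _
    have hpos2 : 0 < a ^ (((1:ℝ) - ε₀) * (K:ℝ)) := Real.rpow_pos_of_pos ha0 _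
    have h2Kpos : (0:ℝ) < 2^K := by positivity
    rw [lt_div_iff₀ h2Kpos]
    have h4 : (2:ℝ)^K * (2:ℝ)^K = 4^K := by rw [← mul_pow]; norm_num
    calc a ^ ((r+2 : ℕ) : ℝ) * (2^K * a ^ (((1:ℝ) - ε₀) * (K:ℝ))) * (K.factorial : ℝ) * 2^K
        = (a ^ ((r+2 : ℕ) : ℝ) * a ^ (((1:ℝ) - ε₀) * (K:ℝ))) * ((2^K * 2^K) * (K.factorial : ℝ)) := by
          ring
      _ = (a ^ ((r+2 : ℕ) : ℝ) * a ^ (((1:ℝ) - ε₀) * (K:ℝ))) * ((4:ℝ)^K * (K.factorial : ℝ)) := by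
          rw [h4]
      _ < (a ^ ((r+2 : ℕ) : ℝ) * a ^ (((1:ℝ) - ε₀) * (K:ℝ))) * a ^ c :=
          mul_lt_mul_of_pos_left hac (mul_pos hpos1 hpos2)
      _ = a ^ ((r+2 : ℕ) : ℝ) * a ^ (((1:ℝ) - ε₀) * (K:ℝ)) * a ^ c := by ring
  have hcore : Mn ^ (r + 2) * s ^ K * K.factorial < (Mn + 1 - K) ^ K := by
    have hreal : a ^ (r+2) * (s:ℝ)^K * (K.factorial : ℝ) < ((Mn + 1 - K : ℕ) : ℝ)^K := by
      calc a ^ (r+2) * (s:ℝ)^K * (K.factorial : ℝ)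
          ≤ a ^ (r+2) * (2 * a ^ ((1:ℝ) - ε₀))^K * (K.factorial : ℝ) := by
            have hp := pow_le_pow_left₀ (Nat.cast_nonneg s) hs_ub K
            exact mul_le_mul_of_nonneg_right
              (mul_le_mul_of_nonneg_left hp (by positivity)) (by positivity)
        _ < (a/2)^K := hmain
        _ ≤ ((Mn + 1 - K : ℕ) : ℝ)^K := pow_le_pow_left₀ (by positivity) hhalf K
    have : ((Mn ^ (r + 2) * s ^ K * K.factorial : ℕ) : ℝ) < (((Mn + 1 - K) ^ K : ℕ) : ℝ) := by
      push_cast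
      convert hreal using 2
    exact_mod_cast this
  have hchoose : Mn ^ (r + 2) * s.choose K < Mn.choose K := by
    have h1 : Mn ^ (r+2) * s.choose K * K.factorial ≤ Mn ^ (r+2) * s ^ K * K.factorial := by
      have := Nat.choose_le_pow s K
      exact Nat.mul_le_mul_right _ (Nat.mul_le_mul_left _ this)
    have h2 : (Mn + 1 - K) ^ K ≤ K.factorial * Mn.choose K := by
      rw [← Nat.descFactorial_eq_factorial_mul_choose]
      exact Nat.pow_sub_le_descFactorial Mn K
    have h3 : Mn ^ (r+2) * s.choose K * K.factorial < K.factorial * Mn.choose K :=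
      lt_of_le_of_lt h1 (lt_of_lt_of_le hcore h2)
    have h4 : K.factorial * (Mn ^ (r+2) * s.choose K) < K.factorial * Mn.choose K := by
      calc K.factorial * (Mn ^ (r+2) * s.choose K)
          = Mn ^ (r+2) * s.choose K * K.factorial := by ring
        _ < K.factorial * Mn.choose K := h3
    exact Nat.lt_of_mul_lt_mul_left h4
  obtain ⟨S, hS1, hS2, hS3⟩ := exists_good N n (r+1) s
    (by rw [hboxcard]; exact hsM)
    (by rw [hboxcard]; exact hchoose)
  refine ⟨S, hS1, ?_, ?_⟩
  · rw [hS2]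
    exact Nat.le_ceil _
  · apply Mval_le ?_ hS3
    have hs1 : 1 ≤ s := Nat.one_le_ceil_iff.2 hT0
    have : S.Nonempty := Finset.card_pos.1 (by omega)
    exact (Finset.coe_nonempty).2 this
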